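/- Let x̃(ȳ) denote the unique solution of ψ'(x)(c − R̃(x,ȳ)) + (ρ+κ)^{−1}ψ(x) = 0 as a function of ȳ > 0, where R̃(x,y) = (μκ + ρx − β(ρ+2κ)y)/(ρ(ρ+κ)). If c − R̃(x̃(ȳ),ȳ) < 0, then x̃ is differentiable and strictly increasing in ȳ, with x̃'(ȳ) = −β(ρ+2κ)ψ'(x̃)/(ρ(ρ+κ)ψ''(x̃)(c−R̃(x̃,ȳ))) > 0. -/

import Mathlib

open Set MeasureTheory Metric

/-- Parabolic cylinder function `D_α(x)` for `α < 0` (integral representation). -/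
noncomputable def Dcyl (α x : ℝ) : ℝ :=
  Real.exp (-x ^ 2 / 4) / Real.Gamma (-α) *
    ∫ t in Ioi (0 : ℝ), t ^ (-α - 1) * Real.exp (-t ^ 2 / 2 - x * t)

/-- Increasing fundamental solution of `(σ²/2)u'' + κ(μ−x)u' − ρu = 0`. -/
noncomputable def psi (κ μ σ ρ : ℝ) (x : ℝ) : ℝ :=
  Real.exp (κ * (x - μ) ^ 2 / (2 * σ ^ 2)) *
    Dcyl (-(ρ / κ)) (-((x - μ) / σ) * Real.sqrt (2 * κ))

/-- Decreasing fundamental solution of `(σ²/2)u'' + κ(μ−x)u' − ρu = 0`. -/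
noncomputable def phi (κ μ σ ρ : ℝ) (x : ℝ) : ℝ :=
  Real.exp (κ * (x - μ) ^ 2 / (2 * σ ^ 2)) *
    Dcyl (-(ρ / κ)) (((x - μ) / σ) * Real.sqrt (2 * κ))

/-- `R̃(z,y) = (μκ + ρz − β(ρ+2κ)y)/(ρ(ρ+κ))`. -/
noncomputable def Rt (κ μ ρ β : ℝ) (z y : ℝ) : ℝ :=
  (μ * κ + ρ * z - β * (ρ + 2 * κ) * y) / (ρ * (ρ + κ))

/-- `Q_k(z) = ψ^{(k)}(z)ψ^{(k+2)}(z) − (ψ^{(k+1)}(z))²`. -/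
noncomputable def Q (κ μ σ ρ : ℝ) (k : ℕ) (z : ℝ) : ℝ :=
  iteratedDeriv k (psi κ μ σ ρ) z * iteratedDeriv (k + 2) (psi κ μ σ ρ) z
    - (iteratedDeriv (k + 1) (psi κ μ σ ρ) z) ^ 2

/-- `D(y,z) = ψ(z)[(ρ+κ)(c − R̃(z,y))Q₁(z) + Q₀'(z)]`. -/
noncomputable def Dfun (κ μ σ ρ β c : ℝ) (y z : ℝ) : ℝ :=
  psi κ μ σ ρ z *
    ((ρ + κ) * (c - Rt κ μ ρ β z y) * Q κ μ σ ρ 1 z + deriv (Q κ μ σ ρ 0) z)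

/-- `N(y,z) = Q₀(z)[((ρ+2κ)/ρ)ψ'(z) + (ρ+κ)(c − R̃(z,y))ψ''(z) + ψ'(z)]`. -/
noncomputable def Nfun (κ μ σ ρ β c : ℝ) (y z : ℝ) : ℝ :=
  Q κ μ σ ρ 0 z *
    ((ρ + 2 * κ) / ρ * deriv (psi κ μ σ ρ) z +
      ((ρ + κ) * (c - Rt κ μ ρ β z y) * iteratedDeriv 2 (psi κ μ σ ρ) z
        + deriv (psi κ μ σ ρ) z))

/-- `H(x) = ψ'(x)(c − R̃(x, ybar)) + (ρ+κ)⁻¹ψ(x)`. -/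
noncomputable def Hfun (κ μ σ ρ β c ybar : ℝ) (x : ℝ) : ℝ :=
  deriv (psi κ μ σ ρ) x * (c - Rt κ μ ρ β x ybar) + (ρ + κ)⁻¹ * psi κ μ σ ρ x

noncomputable def Fk (a lam mu : ℝ) (k : ℕ) (x : ℝ) : ℝ :=
  ∫ t in Ioi (0:ℝ), t ^ (a-1) * (lam*t)^k * Real.exp (-t^2/2 + lam*(x-mu)*t)

lemma meas_aux (b c : ℝ) (k : ℕ) (lam : ℝ) :
    Measurable (fun t : ℝ => t ^ (b-1) * (lam*t)^k * Real.exp (-t^2/2 + c*t)) := by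
  fun_prop

lemma integrable_base (b c : ℝ) (hb : 0 < b) :
    IntegrableOn (fun t : ℝ => t ^ (b-1) * Real.exp (-t^2/2 + c*t)) (Ioi 0) := by
  have hmeas : AEStronglyMeasurable (fun t : ℝ => t ^ (b-1) * Real.exp (-t^2/2 + c*t))
      (volume.restrict (Ioi 0)) := by
    have := meas_aux b c 0 1
    simpa using this.aestronglyMeasurable
  refine Integrable.mono' ((Real.GammaIntegral_convergent hb).const_mul (Real.exp ((c+1)^2/2))) hmeas ?_
  rw [ae_restrict_iff' measurableSet_Ioi]
  refine Filter.Eventually.of_forall fun t ht => ?_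
  have ht0 : (0:ℝ) < t := ht
  have h1 : 0 ≤ t ^ (b-1) := (Real.rpow_pos_of_pos ht0 _).le
  rw [Real.norm_eq_abs, abs_of_nonneg (by positivity)]
  have h2 : Real.exp (-t^2/2 + c*t) ≤ Real.exp ((c+1)^2/2) * Real.exp (-t) := by
    rw [← Real.exp_add]
    exact Real.exp_le_exp.2 (by nlinarith [sq_nonneg (c+1-t)])
  calc t ^ (b-1) * Real.exp (-t^2/2 + c*t)
      ≤ t ^ (b-1) * (Real.exp ((c+1)^2/2) * Real.exp (-t)) :=
        mul_le_mul_of_nonneg_left h2 h1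
    _ = Real.exp ((c+1)^2/2) * (Real.exp (-t) * t ^ (b-1)) := by ring

lemma integrable_Fk (a lam mu : ℝ) (ha : 0 < a) (hlam : 0 < lam) (k : ℕ) (x : ℝ) :
    IntegrableOn (fun t : ℝ => t ^ (a-1) * (lam*t)^k * Real.exp (-t^2/2 + lam*(x-mu)*t))
      (Ioi 0) := by
  have h : IntegrableOn
      (fun t : ℝ => lam^k * (t ^ ((a+(k:ℝ))-1) * Real.exp (-t^2/2 + lam*(x-mu)*t))) (Ioi 0) :=
    (integrable_base (a+k) (lam*(x-mu)) (by positivity)).const_mul (lam^k)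
  refine h.congr_fun (fun t ht => ?_) measurableSet_Ioi
  have ht0 : (0:ℝ) < t := ht
  have : t ^ ((a+(k:ℝ))-1) = t ^ (a-1) * t ^ k := by
    rw [show (a+(k:ℝ))-1 = (a-1)+(k:ℝ) by ring, Real.rpow_add ht0, Real.rpow_natCast]
  dsimp only
  rw [this, mul_pow]
  ring

lemma Fk_pos (a lam mu : ℝ) (ha : 0 < a) (hlam : 0 < lam) (k : ℕ) (x : ℝ) :
    0 < Fk a lam mu k x := by
  have hnn : 0 ≤ᵐ[volume.restrict (Ioi (0:ℝ))]
      fun t : ℝ => t ^ (a-1) * (lam*t)^k * Real.exp (-t^2/2 + lam*(x-mu)*t) := by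
    filter_upwards [ae_restrict_mem measurableSet_Ioi] with t ht
    have ht0 : (0:ℝ) < t := ht
    have := Real.rpow_pos_of_pos ht0 (a-1)
    positivity
  rw [Fk, setIntegral_pos_iff_support_of_nonneg_ae hnn (integrable_Fk a lam mu ha hlam k x)]
  refine lt_of_lt_of_le ?_ (measure_mono (fun t (ht : t ∈ Ioi (0:ℝ)) => ?_))
  · show (0:ENNReal) < volume (Ioi (0:ℝ))
    simp [Real.volume_Ioi]
  · have ht0 : (0:ℝ) < t := ht
    refine ⟨?_, ht⟩
    show t ^ (a-1) * (lam*t)^k * Real.exp (-t^2/2 + lam*(x-mu)*t) ≠ 0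
    have := Real.rpow_pos_of_pos ht0 (a-1)
    positivity

lemma hasDerivAt_Fk (a lam mu : ℝ) (ha : 0 < a) (hlam : 0 < lam) (k : ℕ) (x₀ : ℝ) :
    HasDerivAt (Fk a lam mu k) (Fk a lam mu (k+1) x₀) x₀ := by
  have key := hasDerivAt_integral_of_dominated_loc_of_deriv_le
    (μ := volume.restrict (Ioi (0:ℝ))) (x₀ := x₀)
    (F := fun x t => t ^ (a-1) * (lam*t)^k * Real.exp (-t^2/2 + lam*(x-mu)*t))
    (F' := fun x t => t ^ (a-1) * (lam*t)^(k+1) * Real.exp (-t^2/2 + lam*(x-mu)*t))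
    (bound := fun t => t ^ (a-1) * (lam*t)^(k+1) * Real.exp (-t^2/2 + lam*(x₀+1-mu)*t))
    (ball_mem_nhds x₀ one_pos)
    (Filter.Eventually.of_forall fun x => (meas_aux a (lam*(x-mu)) k lam).aestronglyMeasurable)
    (integrable_Fk a lam mu ha hlam k x₀)
    ((meas_aux a (lam*(x₀-mu)) (k+1) lam).aestronglyMeasurable)
    ?_
    (integrable_Fk a lam mu ha hlam (k+1) (x₀+1))
    ?_
  · exact key.2
  · rw [ae_restrict_iff' measurableSet_Ioi]
    refine Filter.Eventually.of_forall fun t ht => fun x hx => ?_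
    have ht0 : (0:ℝ) < t := ht
    have h1 : (0:ℝ) ≤ t ^ (a-1) * (lam*t)^(k+1) := by
      have := Real.rpow_pos_of_pos ht0 (a-1)
      positivity
    rw [Real.norm_eq_abs, abs_of_nonneg (by
      have := Real.rpow_pos_of_pos ht0 (a-1); positivity)]
    refine mul_le_mul_of_nonneg_left (Real.exp_le_exp.2 ?_) h1
    have hx1 : x ≤ x₀ + 1 := by
      have := mem_ball_iff_norm.mp hx
      have := abs_lt.mp (by simpa [Real.norm_eq_abs] using this)
      linarith [this.2]
    have : lam*(x-mu)*t ≤ lam*(x₀+1-mu)*t := by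
      have : lam*(x-mu) ≤ lam*(x₀+1-mu) :=
        mul_le_mul_of_nonneg_left (by linarith) hlam.le
      exact mul_le_mul_of_nonneg_right this ht0.le
    linarith
  · rw [ae_restrict_iff' measurableSet_Ioi]
    refine Filter.Eventually.of_forall fun t ht => fun x hx => ?_
    have h1 : HasDerivAt (fun x : ℝ => -t^2/2 + lam*(x-mu)*t) (lam*t) x := by
      simpa using ((((hasDerivAt_id x).sub_const mu).const_mul lam).mul_const t).const_add (-t^2/2)
    have h2 := (h1.exp).const_mul (t ^ (a-1) * (lam*t)^k)
    refine h2.congr_deriv ?_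
    ring

lemma psi_eq (κ μ σ ρ : ℝ) (hκ : 0 < κ) (hσ : 0 < σ) (x : ℝ) :
    psi κ μ σ ρ x = Fk (ρ/κ) (Real.sqrt (2*κ)/σ) μ 0 x / Real.Gamma (ρ/κ) := by
  have hσ' : σ ≠ 0 := hσ.ne'
  have hsq : Real.sqrt (2*κ) ^ 2 = 2*κ := Real.sq_sqrt (by positivity)
  rw [psi, Dcyl, neg_neg, Fk]
  have hI : (∫ t in Ioi (0:ℝ),
        t ^ (ρ/κ - 1) * Real.exp (-t^2/2 - (-((x-μ)/σ) * Real.sqrt (2*κ)) * t))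
      = ∫ t in Ioi (0:ℝ), t ^ (ρ/κ-1) * ((Real.sqrt (2*κ)/σ)*t)^0
          * Real.exp (-t^2/2 + (Real.sqrt (2*κ)/σ)*(x-μ)*t) := by
    refine setIntegral_congr_fun measurableSet_Ioi fun t ht => ?_
    rw [pow_zero, mul_one]
    congr 1
    field_simp
    ring
  rw [hI]
  have hAB : Real.exp (κ*(x-μ)^2/(2*σ^2))
      * Real.exp (-(-((x-μ)/σ) * Real.sqrt (2*κ))^2/4) = 1 := by
    rw [← Real.exp_add, ← Real.exp_zero]
    congr 1
    have : (-((x-μ)/σ) * Real.sqrt (2*κ))^2 = 2*κ*(x-μ)^2/σ^2 := by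
      rw [mul_pow, hsq]
      field_simp
    rw [this]
    field_simp
    ring
  linear_combination (∫ t in Ioi (0:ℝ), t ^ (ρ/κ-1) * ((Real.sqrt (2*κ)/σ)*t)^0
      * Real.exp (-t^2/2 + (Real.sqrt (2*κ)/σ)*(x-μ)*t)) / Real.Gamma (ρ/κ) * hAB

noncomputable def Bfun (κ μ σ ρ β : ℝ) (x : ℝ) : ℝ :=
  β*(ρ+2*κ)/(ρ*(ρ+κ)) * deriv (psi κ μ σ ρ) x

noncomputable def Gfun (κ μ σ ρ β c : ℝ) (x : ℝ) : ℝ :=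
  -(Hfun κ μ σ ρ β c 0 x) / (Bfun κ μ σ ρ β x)

noncomputable def gfun (κ μ σ ρ β c : ℝ) (x : ℝ) : ℝ :=
  (Hfun κ μ σ ρ β c 0 x * (β*(ρ+2*κ)/(ρ*(ρ+κ)) * iteratedDeriv 2 (psi κ μ σ ρ) x)
    - iteratedDeriv 2 (psi κ μ σ ρ) x * (c - Rt κ μ ρ β x 0) * Bfun κ μ σ ρ β x)
  / (Bfun κ μ σ ρ β x)^2

/-- If `x̃(ybar)` is the unique zero of `H(·, ybar)` and `c − R̃(x̃(ybar), ybar) < 0`, then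
`x̃` is differentiable and strictly increasing in `ybar`, with
`x̃'(ybar) = −β(ρ+2κ)ψ'(x̃)/(ρ(ρ+κ)ψ''(x̃)(c−R̃(x̃, ybar))) > 0`. -/
theorem stmt18 (κ σ ρ μ β c : ℝ) (hκ : 0 < κ) (hσ : 0 < σ) (hρ : 0 < ρ)
    (hβ : 0 < β) (hc : 0 ≤ c)
    (xt : ℝ → ℝ)
    (hzero : ∀ ybar > (0 : ℝ), Hfun κ μ σ ρ β c ybar (xt ybar) = 0)
    (huniq : ∀ ybar > (0 : ℝ), ∀ x : ℝ, Hfun κ μ σ ρ β c ybar x = 0 → x = xt ybar)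
    (hneg : ∀ ybar > (0 : ℝ), c - Rt κ μ ρ β (xt ybar) ybar < 0) :
    (∀ ybar > (0 : ℝ),
      HasDerivAt xt
        (-(β * (ρ + 2 * κ) * deriv (psi κ μ σ ρ) (xt ybar)) /
          (ρ * (ρ + κ) * iteratedDeriv 2 (psi κ μ σ ρ) (xt ybar) *
            (c - Rt κ μ ρ β (xt ybar) ybar))) ybar ∧
      0 < -(β * (ρ + 2 * κ) * deriv (psi κ μ σ ρ) (xt ybar)) /
          (ρ * (ρ + κ) * iteratedDeriv 2 (psi κ μ σ ρ) (xt ybar) *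
            (c - Rt κ μ ρ β (xt ybar) ybar))) ∧
      StrictMonoOn xt (Set.Ioi (0 : ℝ)) := by
  have hρκ : (0:ℝ) < ρ + κ := by linarith
  have hρ2κ : (0:ℝ) < ρ + 2*κ := by linarith
  have ha : 0 < ρ/κ := div_pos hρ hκ
  have hlam : 0 < Real.sqrt (2*κ)/σ := div_pos (Real.sqrt_pos.2 (by positivity)) hσ
  have hΓ : 0 < Real.Gamma (ρ/κ) := Real.Gamma_pos_of_pos ha
  set a := ρ/κ
  set lam := Real.sqrt (2*κ)/σ
  set Γa := Real.Gamma a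
  have hpsi : psi κ μ σ ρ = fun x => Fk a lam μ 0 x / Γa := funext (psi_eq κ μ σ ρ hκ hσ)
  have hDpsi : deriv (psi κ μ σ ρ) = fun x => Fk a lam μ 1 x / Γa := by
    funext x
    rw [hpsi]
    exact ((hasDerivAt_Fk a lam μ ha hlam 0 x).div_const Γa).deriv
  have hD2psi : iteratedDeriv 2 (psi κ μ σ ρ) = fun x => Fk a lam μ 2 x / Γa := by
    funext x
    rw [show (2:ℕ) = 1+1 from rfl, iteratedDeriv_succ, iteratedDeriv_one, hDpsi]
    exact ((hasDerivAt_Fk a lam μ ha hlam 1 x).div_const Γa).deriv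
  have hpsi'pos : ∀ x, 0 < deriv (psi κ μ σ ρ) x := fun x => by
    rw [hDpsi]; exact div_pos (Fk_pos a lam μ ha hlam 1 x) hΓ
  have hpsi''pos : ∀ x, 0 < iteratedDeriv 2 (psi κ μ σ ρ) x := fun x => by
    rw [hD2psi]; exact div_pos (Fk_pos a lam μ ha hlam 2 x) hΓ
  have hdpsi1 : ∀ x, HasDerivAt (psi κ μ σ ρ) (deriv (psi κ μ σ ρ) x) x := fun x => by
    rw [hDpsi, hpsi]; exact (hasDerivAt_Fk a lam μ ha hlam 0 x).div_const Γa
  have hdpsi2 : ∀ x, HasDerivAt (deriv (psi κ μ σ ρ)) (iteratedDeriv 2 (psi κ μ σ ρ) x) x :=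
    fun x => by
    rw [hD2psi, hDpsi]; exact (hasDerivAt_Fk a lam μ ha hlam 1 x).div_const Γa
  -- derivative of Rt in x
  have hRtd : ∀ y x, HasDerivAt (fun z => Rt κ μ ρ β z y) ((ρ+κ)⁻¹) x := by
    intro y x
    have h := ((((hasDerivAt_id x).const_mul ρ).const_add (μ*κ)).sub_const
        (β*(ρ+2*κ)*y)).div_const (ρ*(ρ+κ))
    show HasDerivAt (fun z => (μ*κ + ρ*z - β*(ρ+2*κ)*y) / (ρ*(ρ+κ))) ((ρ+κ)⁻¹) x
    refine h.congr_deriv ?_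
    field_simp
  -- derivative of Hfun in x
  have hHd : ∀ y x, HasDerivAt (Hfun κ μ σ ρ β c y)
      (iteratedDeriv 2 (psi κ μ σ ρ) x * (c - Rt κ μ ρ β x y)) x := by
    intro y x
    have h1 := (hdpsi2 x).mul ((hRtd y x).const_sub c)
    have h2 := (hdpsi1 x).const_mul (ρ+κ)⁻¹
    have h3 := h1.add h2
    show HasDerivAt (fun z => deriv (psi κ μ σ ρ) z * (c - Rt κ μ ρ β z y)
        + (ρ+κ)⁻¹ * psi κ μ σ ρ z)
      (iteratedDeriv 2 (psi κ μ σ ρ) x * (c - Rt κ μ ρ β x y)) x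
    refine h3.congr_deriv ?_
    ring
  have hBpos : ∀ x, 0 < Bfun κ μ σ ρ β x := fun x => by
    rw [Bfun]
    exact mul_pos (by positivity) (hpsi'pos x)
  have hsplit : ∀ y x, Hfun κ μ σ ρ β c y x
      = Hfun κ μ σ ρ β c 0 x + y * Bfun κ μ σ ρ β x := by
    intro y x
    simp only [Hfun, Rt, Bfun]
    field_simp
    ring
  have hGiff : ∀ y x, Hfun κ μ σ ρ β c y x = 0 ↔ Gfun κ μ σ ρ β c x = y := by
    intro y x
    rw [hsplit y x, Gfun, div_eq_iff (hBpos x).ne']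
    constructor <;> intro h <;> linarith
  have hBd : ∀ x, HasDerivAt (Bfun κ μ σ ρ β)
      (β*(ρ+2*κ)/(ρ*(ρ+κ)) * iteratedDeriv 2 (psi κ μ σ ρ) x) x := fun x => by
    show HasDerivAt (fun z => β*(ρ+2*κ)/(ρ*(ρ+κ)) * deriv (psi κ μ σ ρ) z)
      (β*(ρ+2*κ)/(ρ*(ρ+κ)) * iteratedDeriv 2 (psi κ μ σ ρ) x) x
    exact (hdpsi2 x).const_mul _
  have hGd : ∀ x, HasDerivAt (Gfun κ μ σ ρ β c) (gfun κ μ σ ρ β c x) x := by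
    intro x
    have h := ((hHd 0 x).neg.div (hBd x) (hBpos x).ne')
    show HasDerivAt (fun z => -(Hfun κ μ σ ρ β c 0 z) / (Bfun κ μ σ ρ β z))
      (gfun κ μ σ ρ β c x) x
    refine h.congr_deriv ?_
    simp only [gfun, Pi.neg_apply]
    ring
  have hcψ'' : Continuous (iteratedDeriv 2 (psi κ μ σ ρ)) := by
    rw [hD2psi]
    exact continuous_iff_continuousAt.2 fun x =>
      ((hasDerivAt_Fk a lam μ ha hlam 2 x).div_const Γa).continuousAt
  have hcA : Continuous (Hfun κ μ σ ρ β c 0) :=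
    continuous_iff_continuousAt.2 fun x => (hHd 0 x).differentiableAt.continuousAt
  have hcB : Continuous (Bfun κ μ σ ρ β) :=
    continuous_iff_continuousAt.2 fun x => (hBd x).differentiableAt.continuousAt
  have hcRt : Continuous (fun x => Rt κ μ ρ β x 0) :=
    continuous_iff_continuousAt.2 fun x => (hRtd 0 x).differentiableAt.continuousAt
  have hgcont : Continuous (gfun κ μ σ ρ β c) := by
    unfold gfun
    exact ((hcA.mul (continuous_const.mul hcψ'')).sub
      ((hcψ''.mul (continuous_const.sub hcRt)).mul hcB)).div (hcB.pow 2)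
      (fun x => pow_ne_zero 2 (hBpos x).ne')
  have hGcont : Continuous (Gfun κ μ σ ρ β c) :=
    continuous_iff_continuousAt.2 fun x => (hGd x).differentiableAt.continuousAt
  -- main per-ybar statement
  have key : ∀ ybar > (0:ℝ),
      HasDerivAt xt
        (-(β * (ρ + 2 * κ) * deriv (psi κ μ σ ρ) (xt ybar)) /
          (ρ * (ρ + κ) * iteratedDeriv 2 (psi κ μ σ ρ) (xt ybar) *
            (c - Rt κ μ ρ β (xt ybar) ybar))) ybar ∧
      0 < -(β * (ρ + 2 * κ) * deriv (psi κ μ σ ρ) (xt ybar)) /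
          (ρ * (ρ + κ) * iteratedDeriv 2 (psi κ μ σ ρ) (xt ybar) *
            (c - Rt κ μ ρ β (xt ybar) ybar)) := by
    intro ybar hy
    set x₀ := xt ybar with hx₀def
    have hx0G : Gfun κ μ σ ρ β c x₀ = ybar := (hGiff ybar x₀).mp (hzero ybar hy)
    have hA0 : Hfun κ μ σ ρ β c 0 x₀ = -(ybar * Bfun κ μ σ ρ β x₀) := by
      have := hzero ybar hy
      rw [hsplit ybar x₀] at this
      linarith
    have hRty : c - Rt κ μ ρ β x₀ ybar
        = c - Rt κ μ ρ β x₀ 0 + ybar * (β*(ρ+2*κ)/(ρ*(ρ+κ))) := by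
      simp only [Rt]
      field_simp
      ring
    have hgval : gfun κ μ σ ρ β c x₀
        = -(iteratedDeriv 2 (psi κ μ σ ρ) x₀ * (c - Rt κ μ ρ β x₀ ybar))
          / Bfun κ μ σ ρ β x₀ := by
      simp only [gfun]
      rw [div_eq_div_iff (pow_ne_zero 2 (hBpos x₀).ne') (hBpos x₀).ne', hA0, hRty]
      ring
    have hgpos : 0 < gfun κ μ σ ρ β c x₀ := by
      rw [hgval]
      exact div_pos (neg_pos.2 (mul_neg_of_pos_of_neg (hpsi''pos x₀) (hneg ybar hy)))
        (hBpos x₀)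
    -- ball where gfun positive
    have hnb : ∀ᶠ x in nhds x₀, 0 < gfun κ μ σ ρ β c x :=
      hgcont.continuousAt.eventually_const_lt hgpos
    obtain ⟨δ, hδ, hball⟩ := Metric.eventually_nhds_iff_ball.mp hnb
    have hmono : StrictMonoOn (Gfun κ μ σ ρ β c) (Icc (x₀-δ/2) (x₀+δ/2)) := by
      refine strictMonoOn_of_deriv_pos (convex_Icc _ _) hGcont.continuousOn ?_
      intro x hx
      rw [interior_Icc] at hx
      rw [(hGd x).deriv]
      refine hball x ?_
      rw [mem_ball, Real.dist_eq]
      rw [mem_Ioo] at hx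
      rw [abs_lt]
      constructor <;> [linarith [hx.1]; linarith [hx.2]]
    have hcxt : ContinuousAt xt ybar := by
      rw [Metric.continuousAt_iff]
      intro ε hε
      set r := min (δ/2) (ε/2) with hr
      have hrδ : r ≤ δ/2 := min_le_left _ _
      have hrε : r ≤ ε/2 := min_le_right _ _
      have hr0 : 0 < r := lt_min (by linarith) (by linarith)
      have hm1 : x₀ - r ∈ Icc (x₀-δ/2) (x₀+δ/2) := ⟨by linarith, by linarith⟩
      have hm0 : x₀ ∈ Icc (x₀-δ/2) (x₀+δ/2) := ⟨by linarith, by linarith⟩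
      have hm2 : x₀ + r ∈ Icc (x₀-δ/2) (x₀+δ/2) := ⟨by linarith, by linarith⟩
      have h1 : Gfun κ μ σ ρ β c (x₀ - r) < ybar := by
        have := hmono hm1 hm0 (by linarith)
        rwa [hx0G] at this
      have h2 : ybar < Gfun κ μ σ ρ β c (x₀ + r) := by
        have := hmono hm0 hm2 (by linarith)
        rwa [hx0G] at this
      have hopen : Ioo (Gfun κ μ σ ρ β c (x₀-r)) (Gfun κ μ σ ρ β c (x₀+r)) ∩ Ioi 0
          ∈ nhds ybar :=
        Filter.inter_mem (Ioo_mem_nhds h1 h2) (Ioi_mem_nhds hy)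
      obtain ⟨ε', hε'pos, hε'sub⟩ := Metric.mem_nhds_iff.mp hopen
      refine ⟨ε', hε'pos, fun {y} hyd => ?_⟩
      have hymem := hε'sub (mem_ball.2 hyd)
      obtain ⟨hyI, hy0⟩ := hymem
      obtain ⟨x, hxI, hxG⟩ :=
        intermediate_value_Ioo (by linarith : x₀ - r ≤ x₀ + r) hGcont.continuousOn hyI
      have hxt : x = xt y := huniq y hy0 x ((hGiff y x).mpr hxG)
      rw [← hxt]
      rw [Real.dist_eq, abs_lt, mem_Ioo] at *
      constructor <;> [linarith [hxI.1]; linarith [hxI.2]]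
    have hder : HasDerivAt xt ((gfun κ μ σ ρ β c x₀)⁻¹) ybar := by
      refine HasDerivAt.of_local_left_inverse hcxt (hGd x₀) (ne_of_gt hgpos) ?_
      filter_upwards [Ioi_mem_nhds hy] with y hy' using (hGiff y (xt y)).mp (hzero y hy')
    have hval : (gfun κ μ σ ρ β c x₀)⁻¹
        = -(β * (ρ + 2 * κ) * deriv (psi κ μ σ ρ) x₀) /
          (ρ * (ρ + κ) * iteratedDeriv 2 (psi κ μ σ ρ) x₀ * (c - Rt κ μ ρ β x₀ ybar)) := by
      have h1 : iteratedDeriv 2 (psi κ μ σ ρ) x₀ ≠ 0 := (hpsi''pos x₀).ne'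
      have h2 : c - Rt κ μ ρ β x₀ ybar ≠ 0 := (hneg ybar hy).ne
      have h3 : deriv (psi κ μ σ ρ) x₀ ≠ 0 := (hpsi'pos x₀).ne'
      rw [hgval, inv_div]
      simp only [Bfun]
      rw [div_eq_div_iff (neg_ne_zero.2 (mul_ne_zero h1 h2))
        (mul_ne_zero (mul_ne_zero (mul_ne_zero hρ.ne' hρκ.ne') h1) h2)]
      field_simp
    rw [hval] at hder
    refine ⟨hder, ?_⟩
    rw [← hval]
    exact inv_pos.2 hgpos
  refine ⟨key, ?_⟩
  refine strictMonoOn_of_deriv_pos (convex_Ioi 0)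
    (fun y hy => ((key y hy).1.differentiableAt.continuousAt.continuousWithinAt)) ?_
  intro y hy
  rw [interior_Ioi] at hy
  rw [(key y hy).1.deriv]
  exact (key y hy).2
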